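/- Let s ≥ 2 be an integer, q_0 = 0, q_{n+1} = (q_n^s + s - 1)/s. Then ∑_{j=0}^{∞} (1 - q_j) = ∞, and consequently ∏_{j=k}^{n-1} q_j^{s-1} → 0 as n → ∞ for every fixed k. -/

import Mathlib

theorem stmt_14 (s : ℕ) (hs : 2 ≤ s) (q : ℕ → ℝ)
    (hq0 : q 0 = 0) (hqrec : ∀ n, q (n+1) = (q n ^ s + s - 1) / s) :
    Filter.Tendsto (fun n : ℕ => ∑ j ∈ Finset.range n, (1 - q j))
      Filter.atTop Filter.atTop ∧
    ∀ k : ℕ, Filter.Tendsto (fun n : ℕ => ∏ j ∈ Finset.Ico k n, q j ^ (s - 1))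
      Filter.atTop (nhds 0) := by
  have hsR : (2:ℝ) ≤ (s:ℝ) := by exact_mod_cast hs
  have hs0 : (0:ℝ) < (s:ℝ) := by linarith
  have hsne : s ≠ 0 := by omega
  -- basic bounds on q
  have hb : ∀ n, 0 ≤ q n ∧ q n < 1 := by
    intro n
    induction n with
    | zero => simp [hq0]
    | succ n ih =>
      obtain ⟨h0, h1⟩ := ih
      have hp0 : (0:ℝ) ≤ q n ^ s := pow_nonneg h0 s
      have hp1 : q n ^ s < 1 := pow_lt_one₀ h0 h1 hsne
      constructor
      · rw [hqrec]
        exact div_nonneg (by linarith) hs0.le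
      · rw [hqrec, div_lt_one hs0]
        linarith
  -- recursion for e = 1 - q
  have he : ∀ n, 1 - q (n+1) = (1 - q n ^ s) / s := by
    intro n
    rw [hqrec]
    field_simp
    ring
  have hepos : ∀ n, 0 < 1 - q n := fun n => by linarith [(hb n).2]
  have hesmall : ∀ n, 1 - q (n+1) ≤ 1 / s := by
    intro n
    rw [he, div_le_div_iff₀ hs0 hs0]
    nlinarith [pow_nonneg (hb n).1 s]
  -- Gauss sum
  have hgauss : (∑ i ∈ Finset.range s, (i:ℝ)) = (s:ℝ) * ((s:ℝ) - 1) / 2 := by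
    have := Finset.sum_range_id_mul_two s
    have h2 : ((∑ i ∈ Finset.range s, i) * 2 : ℕ) = (s * (s - 1) : ℕ) := this
    have := congrArg (fun x : ℕ => (x : ℝ)) h2
    push_cast [Nat.cast_sub (by omega : 1 ≤ s)] at this
    linarith
  -- key inequality: e(n+1) ≥ e n * (1 - (s-1)/2 * e n)
  have hkey : ∀ n, (1 - q n) * (1 - ((s:ℝ)-1)/2 * (1 - q n)) ≤ 1 - q (n+1) := by
    intro n
    obtain ⟨h0, h1⟩ := hb n
    rw [he]
    have hA : (s:ℝ) + (q n - 1) * ((s:ℝ) * ((s:ℝ)-1)/2) ≤ ∑ i ∈ Finset.range s, q n ^ i := by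
      have hterm : ∀ i ∈ Finset.range s, 1 + (i:ℝ) * (q n - 1) ≤ q n ^ i := by
        intro i _
        have := one_add_mul_le_pow (a := q n - 1) (by linarith) i
        simpa using this
      calc (s:ℝ) + (q n - 1) * ((s:ℝ) * ((s:ℝ)-1)/2)
          = ∑ i ∈ Finset.range s, (1 + (i:ℝ) * (q n - 1)) := by
            rw [Finset.sum_add_distrib]
            simp [← Finset.sum_mul, hgauss]
            ring
        _ ≤ _ := Finset.sum_le_sum hterm
    have hgs : (1 - q n) * (∑ i ∈ Finset.range s, q n ^ i) = 1 - q n ^ s := by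
      have := geom_sum_mul (q n) s
      nlinarith [this]
    rw [le_div_iff₀ hs0]
    nlinarith [hgs, mul_le_mul_of_nonneg_left hA (le_of_lt (hepos n))]
  -- invariant: 1 ≤ s*(n+1) * e(n+1)
  have hinv : ∀ n : ℕ, 1 ≤ (s:ℝ) * ((n:ℝ)+1) * (1 - q (n+1)) := by
    intro n
    induction n with
    | zero =>
      have hq1 : q 1 = ((s:ℝ) - 1) / s := by
        rw [hqrec 0, hq0, zero_pow hsne]
        ring_nf
      rw [hq1]
      field_simp
      norm_num
    | succ n ih =>
      have hk := hkey (n+1)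
      have he1 := hepos (n+1)
      have he2 := hepos (n+2)
      have hsm := hesmall n
      set e : ℝ := 1 - q (n+1) with hedef
      set e' : ℝ := 1 - q (n+2) with he'def
      -- e ≤ 1/s, so (s-1)/2 * e ≤ 1/2 - 1/(2s) < 1/2
      have hse : (s:ℝ) * e ≤ 1 := by
        rw [hedef]
        calc (s:ℝ) * (1 - q (n+1)) ≤ (s:ℝ) * (1/s) := by
              exact mul_le_mul_of_nonneg_left hsm hs0.le
          _ = 1 := by field_simp
      have hAe : 1 ≤ (s:ℝ) * ((n:ℝ)+1) * e := ih
      -- goal: 1 ≤ s*(n+2)*e'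
      have hgoal : 1 ≤ (s:ℝ) * ((n:ℝ)+1+1) * e' := by
        have hce : ((s:ℝ)-1)/2 * e ≤ 1/2 := by nlinarith
        have h1 : (s:ℝ) * ((n:ℝ)+1+1) * e' ≥ (s:ℝ) * ((n:ℝ)+1+1) * (e * (1 - ((s:ℝ)-1)/2 * e)) := by
          apply mul_le_mul_of_nonneg_left hk
          positivity
        nlinarith [mul_nonneg (sub_nonneg.mpr hAe) (by linarith : (0:ℝ) ≤ 1 - ((s:ℝ)-1)/2 * e),
          mul_nonneg (mul_nonneg (by linarith : (0:ℝ) ≤ ((s:ℝ)-1)/2) he1.le) (by linarith : (0:ℝ) ≤ 1 - (s:ℝ)*e),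
          he1.le]
      convert hgoal using 2
      push_cast
      ring
  -- lower bound e(n+1) ≥ 1/(s*(n+1))
  have hlow : ∀ n : ℕ, 1 / ((s:ℝ) * ((n:ℝ)+1)) ≤ 1 - q (n+1) := by
    intro n
    rw [div_le_iff₀ (by positivity)]
    nlinarith [hinv n]
  -- Part 1
  have part1 : Filter.Tendsto (fun n : ℕ => ∑ j ∈ Finset.range n, (1 - q j))
      Filter.atTop Filter.atTop := by
    rw [← Filter.tendsto_add_atTop_iff_nat 1]
    apply Filter.tendsto_atTop_mono
      (f := fun n : ℕ => (1/(s:ℝ)) * ∑ i ∈ Finset.range n, 1/((i:ℝ)+1))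
    · intro n
      rw [Finset.sum_range_succ' (fun j => 1 - q j) n]
      have h1 : (1/(s:ℝ)) * ∑ i ∈ Finset.range n, 1/((i:ℝ)+1)
          ≤ ∑ i ∈ Finset.range n, (1 - q (i+1)) := by
        rw [Finset.mul_sum]
        apply Finset.sum_le_sum
        intro i _
        rw [div_mul_div_comm, one_mul]
        exact hlow i
      have : (0:ℝ) ≤ 1 - q 0 := by simp [hq0]
      linarith
    · exact Filter.Tendsto.const_mul_atTop (by positivity)
        Real.tendsto_sum_range_one_div_nat_succ_atTop
  refine ⟨part1, fun k => ?_⟩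
  -- Part 2
  have hub : ∀ n, ∏ j ∈ Finset.Ico k n, q j ^ (s-1)
      ≤ Real.exp (-(∑ j ∈ Finset.Ico k n, (1 - q j))) := by
    intro n
    have step1 : ∏ j ∈ Finset.Ico k n, q j ^ (s-1) ≤ ∏ j ∈ Finset.Ico k n, q j := by
      apply Finset.prod_le_prod
      · intro i _; exact pow_nonneg (hb i).1 _
      · intro i _
        have := pow_le_pow_of_le_one (hb i).1 (hb i).2.le (by omega : 1 ≤ s - 1)
        simpa using this
    have step2 : ∏ j ∈ Finset.Ico k n, q j
        ≤ ∏ j ∈ Finset.Ico k n, Real.exp (-(1 - q j)) := by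
      apply Finset.prod_le_prod
      · intro i _; exact (hb i).1
      · intro i _
        have := Real.add_one_le_exp (-(1 - q i))
        linarith
    have step3 : ∏ j ∈ Finset.Ico k n, Real.exp (-(1 - q j))
        = Real.exp (-(∑ j ∈ Finset.Ico k n, (1 - q j))) := by
      rw [← Real.exp_sum, Finset.sum_neg_distrib]
    linarith
  apply squeeze_zero (g := fun n => Real.exp (-(∑ j ∈ Finset.Ico k n, (1 - q j))))
  · intro n
    exact Finset.prod_nonneg fun i _ => pow_nonneg (hb i).1 _
  · exact hub
  · have hsum : Filter.Tendsto (fun n : ℕ => ∑ j ∈ Finset.Ico k n, (1 - q j))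
        Filter.atTop Filter.atTop := by
      apply Filter.Tendsto.congr' (f₁ := fun n : ℕ =>
        ∑ j ∈ Finset.range n, (1 - q j) - ∑ j ∈ Finset.range k, (1 - q j))
      · filter_upwards [Filter.eventually_ge_atTop k] with n hn
        rw [Finset.sum_Ico_eq_sub _ hn]
      · exact Filter.tendsto_atTop_add_const_right _ _ part1
    exact Real.tendsto_exp_atBot.comp (Filter.tendsto_neg_atTop_atBot.comp hsum)
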